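/- Let H be a finite group with an exact coprime factorization H = AB, i.e., A and B are proper subgroups with A ∩ B = 1 and gcd(|H:A|, |H:B|) = 1. If V is a non-trivial irreducible kH-module over a field k, then either A fixes no non-zero vector of V or B fixes no non-zero vector of V. -/

import Mathlib

private lemma aux6 {k V H : Type*} [Field k] [AddCommGroup V] [Module k V]
    [Group H] [Finite H] [DistribMulAction H V] [SMulCommClass H k V]
    (A B : Subgroup H)
    (hfact : ∀ h : H, ∃ b ∈ B, ∃ a ∈ A, h = b * a)
    (hBne : (Nat.card B : k) ≠ 0)
    (hbot : ∀ x : V, (∀ h : H, h • x = x) → x = 0)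
    (hirr : ∀ W : Submodule k V, (∀ (h : H) (w : V), w ∈ W → h • w ∈ W) → W = ⊥ ∨ W = ⊤)
    (v w : V) (hv0 : v ≠ 0) (hvA : ∀ g ∈ A, g • v = v)
    (hw0 : w ≠ 0) (hwB : ∀ g ∈ B, g • w = w) : False := by
  classical
  letI : Fintype B := Fintype.ofFinite B
  set σB : V →ₗ[k] V := ∑ b : B, DistribMulAction.toLinearMap k V (b : H) with hσB
  have happ : ∀ x : V, σB x = ∑ b : B, (b : H) • x := by
    intro x
    rw [hσB, LinearMap.sum_apply]
    rfl
  have hright : ∀ (b : B) (x : V), σB ((b : H) • x) = σB x := by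
    intro b x
    rw [happ, happ]
    exact Fintype.sum_equiv (Equiv.mulRight b) _ _ (fun b' => by simp [mul_smul])
  have hval : ∀ g : H, σB (g • v) = σB v := by
    intro g
    obtain ⟨b, hb, a, ha, rfl⟩ := hfact g
    rw [mul_smul, hvA a ha, hright ⟨b, hb⟩ v]
  -- span of the orbit of v is everything
  set W : Submodule k V := Submodule.span k (Set.range fun g : H => g • v) with hW
  have hWinv : ∀ (h : H) (x : V), x ∈ W → h • x ∈ W := by
    intro h x hx
    have hle : W.map (DistribMulAction.toLinearMap k V h) ≤ W := by
      rw [hW, Submodule.map_span, Submodule.span_le]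
      rintro _ ⟨_, ⟨g, rfl⟩, rfl⟩
      exact Submodule.subset_span ⟨h * g, by simp [mul_smul]; rfl⟩
    exact hle ⟨x, hx, rfl⟩
  have hWtop : W = ⊤ := by
    rcases hirr W hWinv with h0 | h1
    · exfalso
      have hvW : v ∈ W := Submodule.subset_span ⟨1, one_smul _ _⟩
      rw [h0, Submodule.mem_bot] at hvW
      exact hv0 hvW
    · exact h1
  -- σB maps everything into the line spanned by u := σB v
  have hline : ∀ x : V, σB x ∈ Submodule.span k {σB v} := by
    intro x
    have hle : W ≤ Submodule.comap σB (Submodule.span k {σB v}) := by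
      rw [hW, Submodule.span_le]
      rintro _ ⟨g, rfl⟩
      show σB (g • v) ∈ Submodule.span k {σB v}
      rw [hval g]
      exact Submodule.mem_span_singleton_self (R := k) (σB v)
    have : x ∈ W := by rw [hWtop]; trivial
    exact hle this
  -- σB w = |B| • w ≠ 0, hence u ≠ 0
  have hσBw : σB w = (Nat.card B : k) • w := by
    rw [happ]
    have : ∀ b : B, (b : H) • w = w := fun b => hwB b b.2
    rw [Finset.sum_congr rfl (fun b _ => this b), Finset.sum_const, Finset.card_univ,
      Nat.cast_smul_eq_nsmul, Nat.card_eq_fintype_card]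
  have hu0 : σB v ≠ 0 := by
    intro h
    have := hline w
    rw [h, Submodule.span_zero_singleton k, Submodule.mem_bot, hσBw] at this
    exact smul_ne_zero hBne hw0 this
  -- pick a functional not vanishing on u
  have : ¬ ∀ ψ : Module.Dual k V, ψ (σB v) = 0 := by
    rw [Module.forall_dual_apply_eq_zero_iff]
    exact hu0
  push_neg at this
  obtain ⟨ψ, hψ⟩ := this
  -- the kernel submodule
  set K : Submodule k V :=
    { carrier := {x | ∀ g : H, ψ (σB (g • x)) = 0}
      zero_mem' := by intro g; rw [smul_zero, map_zero, map_zero]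
      add_mem' := by
        intro x y hx hy g
        rw [smul_add, map_add, map_add, hx g, hy g, add_zero]
      smul_mem' := by
        intro c x hx g
        rw [smul_comm g c x, map_smul, map_smul, hx g, smul_zero] } with hK
  have hKinv : ∀ (h : H) (x : V), x ∈ K → h • x ∈ K := by
    intro h x hx g
    rw [← mul_smul]
    exact hx (g * h)
  have hKbot : K = ⊥ := by
    rcases hirr K hKinv with h0 | h1
    · exact h0
    · exfalso
      have hvK : v ∈ K := by rw [h1]; trivial
      have := hvK 1
      rw [one_smul] at this
      exact hψ this
  -- every h fixes v
  have hfix : ∀ h : H, h • v = v := by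
    intro h
    have hmem : h • v - v ∈ K := by
      intro g
      rw [smul_sub, map_sub, map_sub, ← mul_smul, hval (g * h), hval g, sub_self]
    rw [hKbot, Submodule.mem_bot, sub_eq_zero] at hmem
    exact hmem
  exact hv0 (hbot v hfix)

/-- If `H = AB` is an exact coprime factorization (`A`, `B` proper,
`A ∩ B = 1`, `gcd(|H:A|,|H:B|) = 1`) and `V` is a non-trivial irreducible
`kH`-module, then either `A` fixes no non-zero vector of `V` or `B` fixes no
non-zero vector of `V`. -/
theorem stmt6 {k V H : Type*} [Field k] [AddCommGroup V] [Module k V]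
    [Group H] [Finite H] [DistribMulAction H V] [SMulCommClass H k V]
    (A B : Subgroup H) (hA : A ≠ ⊤) (hB : B ≠ ⊤)
    (hAB : ∀ h : H, ∃ a ∈ A, ∃ b ∈ B, h = a * b)
    (hexact : A ⊓ B = ⊥)
    (hcop : Nat.Coprime A.index B.index)
    (hnt : ∃ (h : H) (v : V), h • v ≠ v)
    (hirr : ∀ W : Submodule k V, (∀ (h : H) (w : V), w ∈ W → h • w ∈ W) → W = ⊥ ∨ W = ⊤) :
    (∀ v : V, v ≠ 0 → ∃ g ∈ A, g • v ≠ v) ∨ (∀ v : V, v ≠ 0 → ∃ g ∈ B, g • v ≠ v) := by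
  classical
  -- the H-fixed points are trivial
  have hbot : ∀ x : V, (∀ h : H, h • x = x) → x = 0 := by
    set VH : Submodule k V :=
      { carrier := {x | ∀ h : H, h • x = x}
        zero_mem' := fun h => smul_zero h
        add_mem' := by
          intro x y hx hy h
          rw [smul_add, hx h, hy h]
        smul_mem' := by
          intro c x hx h
          rw [smul_comm h c x, hx h] } with hVH
    have hVHinv : ∀ (h : H) (x : V), x ∈ VH → h • x ∈ VH := by
      intro h x hx g
      rw [hx h, hx g]
    intro x hx
    rcases hirr VH hVHinv with h0 | h1
    · have : x ∈ VH := hx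
      rw [h0, Submodule.mem_bot] at this
      exact this
    · exfalso
      obtain ⟨h, y, hy⟩ := hnt
      have : y ∈ VH := by rw [h1]; trivial
      exact hy (this h)
  -- |A| * |B| = |H|
  have hbij : Function.Bijective (fun p : A × B => (p.1 : H) * (p.2 : H)) := by
    constructor
    · rintro ⟨a₁, b₁⟩ ⟨a₂, b₂⟩ hp
      simp only [Prod.mk.injEq] at hp ⊢
      have key : ((a₂ : H)⁻¹ * (a₁ : H)) ∈ A ⊓ B := by
        constructor
        · exact A.mul_mem (A.inv_mem a₂.2) a₁.2
        · have h2 : (a₂ : H)⁻¹ * (a₁ : H) * (b₁ : H) = (b₂ : H) := by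
            rw [mul_assoc, hp, ← mul_assoc, inv_mul_cancel, one_mul]
          have : (a₂ : H)⁻¹ * (a₁ : H) = (b₂ : H) * (b₁ : H)⁻¹ := by
            rw [← h2, mul_inv_cancel_right]
          rw [this]
          exact B.mul_mem b₂.2 (B.inv_mem b₁.2)
      rw [hexact, Subgroup.mem_bot] at key
      have ha : (a₁ : H) = (a₂ : H) := by
        have := key
        group at this ⊢
        calc (a₁ : H) = (a₂ : H) * ((a₂ : H)⁻¹ * (a₁ : H)) := by group
        _ = (a₂ : H) := by rw [key, mul_one]
      have hb : (b₁ : H) = (b₂ : H) := by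
        have := hp
        rw [ha] at this
        exact mul_left_cancel this
      exact ⟨Subtype.ext ha, Subtype.ext hb⟩
    · intro h
      obtain ⟨a, ha, b, hb, hh⟩ := hAB h
      exact ⟨(⟨a, ha⟩, ⟨b, hb⟩), hh.symm⟩
  have hcard : Nat.card A * Nat.card B = Nat.card H := by
    rw [← Nat.card_prod]
    exact Nat.card_eq_of_bijective _ hbij
  have hApos : 0 < Nat.card A := Nat.card_pos
  have hBpos : 0 < Nat.card B := Nat.card_pos
  have hidxA : A.index = Nat.card B := by
    have h1 : Nat.card A * A.index = Nat.card H := Subgroup.card_mul_index A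
    rw [← hcard] at h1
    exact (Nat.eq_of_mul_eq_mul_left hApos h1.symm).symm
  have hidxB : B.index = Nat.card A := by
    have h1 : Nat.card B * B.index = Nat.card H := Subgroup.card_mul_index B
    rw [← hcard, mul_comm (Nat.card A)] at h1
    exact (Nat.eq_of_mul_eq_mul_left hBpos h1.symm).symm
  have hcop' : Nat.Coprime (Nat.card B) (Nat.card A) := by
    rw [← hidxA, ← hidxB]
    exact hcop
  -- at least one of (|A| : k), (|B| : k) is nonzero
  have hone : (Nat.card A : k) ≠ 0 ∨ (Nat.card B : k) ≠ 0 := by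
    by_contra hcon
    push_neg at hcon
    obtain ⟨hA0, hB0⟩ := hcon
    haveI : CharP k (ringChar k) := ringChar.charP k
    have dA : ringChar k ∣ Nat.card A := (ringChar.spec k _).mp hA0
    have dB : ringChar k ∣ Nat.card B := (ringChar.spec k _).mp hB0
    have : ringChar k ∣ 1 := by
      rw [← hcop']
      exact Nat.dvd_gcd dB dA
    rw [Nat.dvd_one] at this
    have : ((1 : ℕ) : k) = 0 := by
      rw [ringChar.spec, this]
    rw [Nat.cast_one] at this
    exact one_ne_zero this
  by_contra hcon
  push_neg at hcon
  obtain ⟨⟨v, hv0, hvA⟩, ⟨w, hw0, hwB⟩⟩ := hcon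
  rcases hone with hAne | hBne
  · -- apply aux with roles swapped : "A" := B, "B" := A
    exact aux6 B A hAB hAne hbot hirr w v hw0 hwB hv0 hvA
  · -- apply aux directly; need the B*A factorization
    have hfact : ∀ h : H, ∃ b ∈ B, ∃ a ∈ A, h = b * a := by
      intro h
      obtain ⟨a, ha, b, hb, hh⟩ := hAB h⁻¹
      refine ⟨b⁻¹, B.inv_mem hb, a⁻¹, A.inv_mem ha, ?_⟩
      rw [← inv_inv h, hh, mul_inv_rev]
    exact aux6 A B hfact hBne hbot hirr v w hv0 hvA hw0 hwB
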